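/- Suppose a_{t+1} = a_t + y_k in a real inner product space with ‖y_k‖ ≤ R, t a positive integer, a_t·y_k ≤ (1−ε)·‖a_t‖²/t with 0 < ε < 1/2. Then ‖a_{t+1}‖²/(t+1)^{2(1−ε)} − ‖a_t‖²/t^{2(1−ε)} ≤ R²/(t+1)^{2(1−ε)}. -/

import Mathlib

open scoped InnerProductSpace

theorem pdm_one_step_descent
    {E : Type*} [NormedAddCommGroup E] [InnerProductSpace ℝ E]
    (a a' y : E) (t : ℕ) (R ε : ℝ)
    (hupd : a' = a + y)
    (hR : ‖y‖ ≤ R)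
    (ht : 1 ≤ t)
    (hε : 0 < ε) (hε2 : ε < 1 / 2)
    (hmis : ⟪a, y⟫_ℝ ≤ (1 - ε) * ‖a‖ ^ 2 / t) :
    ‖a'‖ ^ 2 / ((t : ℝ) + 1) ^ (2 * (1 - ε)) -
      ‖a‖ ^ 2 / (t : ℝ) ^ (2 * (1 - ε)) ≤
      R ^ 2 / ((t : ℝ) + 1) ^ (2 * (1 - ε)) := by
  set p : ℝ := 2 * (1 - ε) with hp
  have htR : (1 : ℝ) ≤ (t : ℝ) := by exact_mod_cast ht
  have ht0 : (0 : ℝ) < t := by linarith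
  have hp1 : (1 : ℝ) ≤ p := by rw [hp]; linarith
  have hT : (0 : ℝ) < (t : ℝ) ^ p := Real.rpow_pos_of_pos ht0 p
  have hP : (0 : ℝ) < ((t : ℝ) + 1) ^ p := Real.rpow_pos_of_pos (by linarith) p
  -- Bernoulli: (1 + 1/t)^p ≥ 1 + p/t
  have hbern : 1 + p * (1 / t) ≤ (1 + 1 / (t : ℝ)) ^ p :=
    one_add_mul_self_le_rpow_one_add (by have := one_div_nonneg.mpr ht0.le; linarith) hp1
  have hratio : 1 + p / (t : ℝ) ≤ ((t : ℝ) + 1) ^ p / (t : ℝ) ^ p := by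
    have h1 : (1 + 1 / (t : ℝ)) = ((t : ℝ) + 1) / t := by field_simp
    have h2 : (((t : ℝ) + 1) / t) ^ p = ((t : ℝ) + 1) ^ p / (t : ℝ) ^ p :=
      Real.div_rpow (by linarith : (0:ℝ) ≤ (t:ℝ)+1) ht0.le p
    calc 1 + p / (t : ℝ) = 1 + p * (1 / t) := by ring
      _ ≤ (1 + 1 / (t : ℝ)) ^ p := hbern
      _ = ((t : ℝ) + 1) ^ p / (t : ℝ) ^ p := by rw [h1, h2]
  have hexp : ‖a'‖ ^ 2 = ‖a‖ ^ 2 + 2 * ⟪a, y⟫_ℝ + ‖y‖ ^ 2 := by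
    rw [hupd]
    rw [@norm_add_sq_real]
  have hy2 : ‖y‖ ^ 2 ≤ R ^ 2 := by nlinarith [norm_nonneg y]
  have hkey : ‖a'‖ ^ 2 ≤ ‖a‖ ^ 2 * (((t : ℝ) + 1) ^ p / (t : ℝ) ^ p) + R ^ 2 := by
    have h3 : ‖a'‖ ^ 2 ≤ ‖a‖ ^ 2 * (1 + p / t) + R ^ 2 := by
      rw [hexp, hp]
      have : 2 * ⟪a, y⟫_ℝ ≤ 2 * ((1 - ε) * ‖a‖ ^ 2 / t) := by linarith
      have heq : ‖a‖ ^ 2 * (1 + 2 * (1 - ε) / t) =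
          ‖a‖ ^ 2 + 2 * ((1 - ε) * ‖a‖ ^ 2 / t) := by field_simp
      linarith
    have h4 : ‖a‖ ^ 2 * (1 + p / t) ≤ ‖a‖ ^ 2 * (((t : ℝ) + 1) ^ p / (t : ℝ) ^ p) := by
      apply mul_le_mul_of_nonneg_left hratio (by positivity)
    linarith
  rw [sub_le_iff_le_add, div_add_div _ _ (ne_of_gt hP) (ne_of_gt hT),
    div_le_div_iff₀ hP (mul_pos hP hT)]
  calc ‖a'‖ ^ 2 * (((t : ℝ) + 1) ^ p * (t : ℝ) ^ p)
      = (‖a'‖ ^ 2 * (t : ℝ) ^ p) * ((t : ℝ) + 1) ^ p := by ring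
    _ ≤ ((‖a‖ ^ 2 * (((t : ℝ) + 1) ^ p / (t : ℝ) ^ p) + R ^ 2) * (t : ℝ) ^ p) *
        ((t : ℝ) + 1) ^ p := by
        apply mul_le_mul_of_nonneg_right _ (le_of_lt hP)
        apply mul_le_mul_of_nonneg_right hkey (le_of_lt hT)
    _ = (R ^ 2 * (t : ℝ) ^ p + ((t : ℝ) + 1) ^ p * ‖a‖ ^ 2) * ((t : ℝ) + 1) ^ p := by
        field_simp
        ring_nf
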